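/- Let f be differentiable on an open interval containing [a,b] with a < b, q > 1 with 1/p + 1/q = 1, and |f'|^q convex on [a,b]. Then |f((a+b)/2) - (1/(b-a)) ∫_a^b f(u) du| ≤ ((b-a)/4)(4/(p+1))^{1/p} (|f'(a)| + |f'(b)|). -/

import Mathlib

set_option maxHeartbeats 2000000

open MeasureTheory intervalIntegral Set

lemma kh_rpow_add_le (x y z : ℝ) (hx : 0 ≤ x) (hy : 0 ≤ y) (hz : 0 ≤ z) (hz1 : z ≤ 1) :
    (x + y) ^ z ≤ x ^ z + y ^ z := by
  have h := NNReal.rpow_add_le_add_rpow ⟨x, hx⟩ ⟨y, hy⟩ hz hz1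
  have h2 := NNReal.coe_le_coe.2 h
  push_cast [NNReal.coe_rpow] at h2
  convert h2 using 2 <;> rfl

lemma kh_scalar (r : ℝ) (hr0 : 0 < r) (hr1 : r < 1) :
    1/8 + (1/2:ℝ) ^ ((3:ℝ) - r) / (3 - r) ≤ (1/4) * (4 * r / (1 + r)) ^ r := by
  have h3r : (0:ℝ) < 3 - r := by linarith
  have hc : (1/2:ℝ) ^ ((3:ℝ) - r) = (2:ℝ) ^ r / 8 := by
    rw [one_div, Real.inv_rpow (by norm_num), Real.rpow_sub (by norm_num)]
    rw [show ((3:ℝ)) = ((3:ℕ):ℝ) by norm_num, Real.rpow_natCast]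
    field_simp
    ring
  have hcb : (2:ℝ) ^ r ≤ 1 + r := by
    have h := Real.geom_mean_le_arith_mean2_weighted hr0.le (by linarith : (0:ℝ) ≤ 1 - r)
      (by norm_num : (0:ℝ) ≤ 2) zero_le_one (by ring)
    simpa [Real.one_rpow] using (by linarith [h] : (2:ℝ) ^ r * 1 ^ (1 - r) ≤ 1 + r)
  have hB : (0:ℝ) < 4 * r / (1 + r) := by positivity
  have hlog : 1 - (1 + r)/(4 * r) ≤ Real.log (4 * r / (1 + r)) := by
    have h := Real.log_le_sub_one_of_pos (show (0:ℝ) < (4 * r / (1 + r))⁻¹ by positivity)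
    rw [Real.log_inv, inv_div] at h
    linarith
  have hE : (3 + 3*r)/4 ≤ (4 * r / (1 + r)) ^ r := by
    rw [Real.rpow_def_of_pos hB]
    have h1 := Real.add_one_le_exp (Real.log (4 * r / (1 + r)) * r)
    have h2 : (1 - (1 + r)/(4*r)) * r ≤ Real.log (4 * r / (1 + r)) * r :=
      mul_le_mul_of_nonneg_right hlog hr0.le
    have h3 : (1 - (1 + r)/(4*r)) * r = r - (1 + r)/4 := by field_simp
    linarith
  have hstep : 1/8 + (1/2:ℝ) ^ ((3:ℝ) - r) / (3 - r) ≤ (1/4) * ((3 + 3*r)/4) := by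
    rw [hc, div_div]
    have hz : (2:ℝ) ^ r / (8 * (3 - r)) ≤ (1 + r) / (8 * (3 - r)) := by gcongr
    have h3 : (8 * (3 - r)) * ((1 + r) / (8 * (3 - r))) = 1 + r := by field_simp
    nlinarith [hz, h3, h3r, hr0, hr1, mul_nonneg hr0.le (sub_nonneg.2 hr1.le)]
  calc 1/8 + (1/2:ℝ) ^ ((3:ℝ) - r) / (3 - r) ≤ (1/4) * ((3 + 3*r)/4) := hstep
    _ ≤ (1/4) * (4 * r / (1 + r)) ^ r := by linarith

theorem kirmaci_holder_simplified
    (a b c d p q : ℝ) (f f' : ℝ → ℝ) (hab : a < b)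
    (hsub : Icc a b ⊆ Ioo c d)
    (hf : ∀ x ∈ Ioo c d, HasDerivAt f (f' x) x)
    (hq : 1 < q) (hpq : 1 / p + 1 / q = 1)
    (hconv : ∀ x ∈ Icc a b, ∀ y ∈ Icc a b, ∀ t ∈ Icc (0:ℝ) 1,
      |f' (t * x + (1 - t) * y)| ^ q ≤ t * |f' x| ^ q + (1 - t) * |f' y| ^ q) :
    |f ((a + b) / 2) - (1 / (b - a)) * ∫ u in a..b, f u| ≤
      ((b - a) / 4) * (4 / (p + 1)) ^ (1 / p) * (|f' a| + |f' b|) := by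
  have hL : (0:ℝ) < b - a := sub_pos.2 hab
  have hq0 : (0:ℝ) < q := lt_trans one_pos hq
  set s : ℝ := 1 / q with hs_def
  have hs0 : 0 < s := by positivity
  have hs1 : s < 1 := by rw [hs_def, div_lt_one hq0]; exact hq
  have hqs : q * s = 1 := by rw [hs_def, mul_one_div_cancel hq0.ne']
  set X := |f' a| with hX_def
  set Y := |f' b| with hY_def
  have hX0 : 0 ≤ X := abs_nonneg _
  have hY0 : 0 ≤ Y := abs_nonneg _
  -- pointwise bound
  have key : ∀ u ∈ Icc a b, |f' u| ≤ ((b-u)/(b-a))^s * X + ((u-a)/(b-a))^s * Y := by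
    intro u hu
    obtain ⟨hua, hub⟩ := hu
    set t := (b-u)/(b-a) with ht_def
    have ht0 : 0 ≤ t := div_nonneg (by linarith) hL.le
    have ht1 : t ≤ 1 := by rw [ht_def, div_le_one hL]; linarith
    have hterm : 1 - t = (u-a)/(b-a) := by
      rw [ht_def]; field_simp; ring
    have hut : t * a + (1 - t) * b = u := by
      rw [hterm, ht_def]; field_simp; ring
    have h1 := hconv a (left_mem_Icc.2 hab.le) b (right_mem_Icc.2 hab.le) t ⟨ht0, ht1⟩
    rw [hut] at h1
    have habs : |f' u| = (|f' u| ^ q) ^ s := by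
      rw [← Real.rpow_mul (abs_nonneg _), hqs, Real.rpow_one]
    rw [← hterm, habs]
    have h1t0 : 0 ≤ 1 - t := by linarith
    calc (|f' u| ^ q) ^ s ≤ (t * X ^ q + (1 - t) * Y ^ q) ^ s :=
          Real.rpow_le_rpow (Real.rpow_nonneg (abs_nonneg _) q) h1 hs0.le
      _ ≤ (t * X ^ q) ^ s + ((1 - t) * Y ^ q) ^ s :=
          kh_rpow_add_le _ _ s (mul_nonneg ht0 (Real.rpow_nonneg hX0 q))
            (mul_nonneg h1t0 (Real.rpow_nonneg hY0 q)) hs0.le hs1.le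
      _ = t ^ s * X + (1 - t) ^ s * Y := by
          rw [Real.mul_rpow ht0 (Real.rpow_nonneg hX0 q),
            Real.mul_rpow h1t0 (Real.rpow_nonneg hY0 q),
            ← Real.rpow_mul hX0, ← Real.rpow_mul hY0, hqs, Real.rpow_one, Real.rpow_one]
  have hXY : ∀ u ∈ Icc a b, |f' u| ≤ X + Y := by
    intro u hu
    have h := key u hu
    have h1 : ((b-u)/(b-a))^s ≤ 1 :=
      Real.rpow_le_one (div_nonneg (by linarith [hu.2]) hL.le)
        (by rw [div_le_one hL]; linarith [hu.1]) hs0.le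
    have h2 : ((u-a)/(b-a))^s ≤ 1 :=
      Real.rpow_le_one (div_nonneg (by linarith [hu.1]) hL.le)
        (by rw [div_le_one hL]; linarith [hu.2]) hs0.le
    have h3 : (0:ℝ) ≤ ((b-u)/(b-a))^s := Real.rpow_nonneg (div_nonneg (by linarith [hu.2]) hL.le) s
    have h4 : (0:ℝ) ≤ ((u-a)/(b-a))^s := Real.rpow_nonneg (div_nonneg (by linarith [hu.1]) hL.le) s
    nlinarith [h, h1, h2, h3, h4, hX0, hY0]
  set m := (a+b)/2 with hm_def
  have hmid : a ≤ m := by rw [hm_def]; linarith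
  have hmid' : m ≤ b := by rw [hm_def]; linarith
  -- integrability of f'
  have hint : ∀ a' b', a ≤ a' → a' ≤ b' → b' ≤ b → IntervalIntegrable f' volume a' b' := by
    intro a' b' h1 h2 h3
    rw [intervalIntegrable_iff_integrableOn_Ioc_of_le h2]
    have hmeas : MeasurableSet (Ioc a' b') := measurableSet_Ioc
    have heq : EqOn (deriv f) f' (Ioc a' b') := fun x hx =>
      (hf x (hsub ⟨le_trans h1 hx.1.le, le_trans hx.2 h3⟩)).deriv
    refine MeasureTheory.IntegrableOn.congr_fun ?_ heq hmeas
    refine MeasureTheory.Integrable.mono' (g := fun _ => X + Y)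
      (integrableOn_const measure_Ioc_lt_top.ne)
      ((measurable_deriv f).aestronglyMeasurable.restrict) ?_
    refine (ae_restrict_iff' hmeas).2 (Filter.Eventually.of_forall fun x hx => ?_)
    rw [Real.norm_eq_abs, heq hx]
    exact hXY x ⟨le_trans h1 hx.1.le, le_trans hx.2 h3⟩
  have hf'1 : IntervalIntegrable f' volume a m := hint a m le_rfl hmid hmid'
  have hf'2 : IntervalIntegrable f' volume m b := hint m b hmid hmid' le_rfl
  -- continuity / integrability of f
  have hcont : ContinuousOn f (Icc a b) := fun x hx =>
    ((hf x (hsub hx)).continuousAt).continuousWithinAt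
  have hfi1 : IntervalIntegrable f volume a m := by
    apply ContinuousOn.intervalIntegrable
    rw [uIcc_of_le hmid]
    exact hcont.mono (Icc_subset_Icc le_rfl hmid')
  have hfi2 : IntervalIntegrable f volume m b := by
    apply ContinuousOn.intervalIntegrable
    rw [uIcc_of_le hmid']
    exact hcont.mono (Icc_subset_Icc hmid le_rfl)
  -- integration by parts identities
  have hparts1 : ∫ x in a..m, (x - a) * f' x
      = (m - a) * f m - (a - a) * f a - ∫ x in a..m, 1 * f x := by
    apply intervalIntegral.integral_mul_deriv_eq_deriv_mul
    · intro x hx; simpa using (hasDerivAt_id x).sub_const a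
    · intro x hx
      rw [uIcc_of_le hmid] at hx
      exact hf x (hsub ⟨hx.1, le_trans hx.2 hmid'⟩)
    · exact intervalIntegrable_const
    · exact hf'1
  have hparts2 : ∫ x in m..b, (x - b) * f' x
      = (b - b) * f b - (m - b) * f m - ∫ x in m..b, 1 * f x := by
    apply intervalIntegral.integral_mul_deriv_eq_deriv_mul
    · intro x hx; simpa using (hasDerivAt_id x).sub_const b
    · intro x hx
      rw [uIcc_of_le hmid'] at hx
      exact hf x (hsub ⟨le_trans hmid hx.1, hx.2⟩)
    · exact intervalIntegrable_const
    · exact hf'2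
  have hsplit : (∫ u in a..b, f u) = (∫ u in a..m, f u) + ∫ u in m..b, f u :=
    (intervalIntegral.integral_add_adjacent_intervals hfi1 hfi2).symm
  have hid : f m - (1/(b-a)) * ∫ u in a..b, f u
      = (1/(b-a)) * ((∫ x in a..m, (x - a) * f' x) + (∫ x in m..b, (x - b) * f' x)) := by
    rw [hparts1, hparts2, hsplit]
    simp only [one_mul]
    have hma : m - a = (b-a)/2 := by rw [hm_def]; ring
    have hbm : b - m = (b-a)/2 := by rw [hm_def]; ring
    field_simp
    ring
  -- triangle inequality
  have hmain : |f m - (1/(b-a)) * ∫ u in a..b, f u|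
      ≤ (1/(b-a)) * (|∫ x in a..m, (x - a) * f' x| + |∫ x in m..b, (x - b) * f' x|) := by
    rw [hid, abs_mul, abs_of_pos (show (0:ℝ) < 1/(b-a) by positivity)]
    exact mul_le_mul_of_nonneg_left (abs_add_le _ _) (by positivity)
  -- continuity of bounding functions
  have hrp1 : Continuous (fun u : ℝ => ((u - a)/(b-a))^s) :=
    ((continuous_id.sub continuous_const).div_const (b-a)).rpow_const (fun x => Or.inr hs0.le)
  have hrp2 : Continuous (fun u : ℝ => ((b - u)/(b-a))^s) :=
    ((continuous_const.sub continuous_id).div_const (b-a)).rpow_const (fun x => Or.inr hs0.le)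
  have hg1a : Continuous (fun u : ℝ => X * (u - a)) :=
    continuous_const.mul (continuous_id.sub continuous_const)
  have hg1b : Continuous (fun u : ℝ => Y * ((u - a) * ((u - a)/(b-a))^s)) :=
    continuous_const.mul ((continuous_id.sub continuous_const).mul hrp1)
  have hg2a : Continuous (fun u : ℝ => X * ((b - u) * ((b - u)/(b-a))^s)) :=
    continuous_const.mul ((continuous_const.sub continuous_id).mul hrp2)
  have hg2b : Continuous (fun u : ℝ => Y * (b - u)) :=
    continuous_const.mul (continuous_const.sub continuous_id)
  -- bound the first integral
  have hb1 : |∫ x in a..m, (x - a) * f' x|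
      ≤ ∫ x in a..m, (X * (x - a) + Y * ((x - a) * ((x - a)/(b-a))^s)) := by
    have hae : ∀ᵐ t ∂(volume.restrict (Set.uIoc a m)),
        ‖(t - a) * f' t‖ ≤ X * (t - a) + Y * ((t - a) * ((t - a)/(b-a))^s) := by
      refine (ae_restrict_iff' measurableSet_uIoc).2 (Filter.Eventually.of_forall fun t ht => ?_)
      rw [uIoc_of_le hmid] at ht
      have htab : t ∈ Icc a b := ⟨ht.1.le, le_trans ht.2 hmid'⟩
      have hta : (0:ℝ) ≤ t - a := by linarith [ht.1]
      have h1 : ((b-t)/(b-a))^s ≤ 1 :=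
        Real.rpow_le_one (div_nonneg (by linarith [htab.2]) hL.le)
          (by rw [div_le_one hL]; linarith [htab.1]) hs0.le
      have hk := key t htab
      rw [Real.norm_eq_abs, abs_mul, abs_of_nonneg hta]
      have h2 : |f' t| ≤ X + ((t-a)/(b-a))^s * Y := by nlinarith [hk, h1, hX0]
      nlinarith [mul_le_mul_of_nonneg_left h2 hta, hta]
    have h := intervalIntegral.norm_integral_le_abs_of_norm_le hae ((hg1a.add hg1b).intervalIntegrable a m)
    rw [Real.norm_eq_abs] at h
    refine le_trans h (le_of_eq (abs_of_nonneg ?_))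
    apply intervalIntegral.integral_nonneg hmid
    intro u hu
    have hua : (0:ℝ) ≤ u - a := by linarith [hu.1]
    have hrp : (0:ℝ) ≤ ((u - a)/(b-a))^s := Real.rpow_nonneg (div_nonneg hua hL.le) s
    exact add_nonneg (mul_nonneg hX0 hua) (mul_nonneg hY0 (mul_nonneg hua hrp))
  -- bound the second integral
  have hb2 : |∫ x in m..b, (x - b) * f' x|
      ≤ ∫ x in m..b, (X * ((b - x) * ((b - x)/(b-a))^s) + Y * (b - x)) := by
    have hae : ∀ᵐ t ∂(volume.restrict (Set.uIoc m b)),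
        ‖(t - b) * f' t‖ ≤ X * ((b - t) * ((b - t)/(b-a))^s) + Y * (b - t) := by
      refine (ae_restrict_iff' measurableSet_uIoc).2 (Filter.Eventually.of_forall fun t ht => ?_)
      rw [uIoc_of_le hmid'] at ht
      have htab : t ∈ Icc a b := ⟨le_trans hmid ht.1.le, ht.2⟩
      have htb : (0:ℝ) ≤ b - t := by linarith [ht.2]
      have h1 : ((t-a)/(b-a))^s ≤ 1 :=
        Real.rpow_le_one (div_nonneg (by linarith [htab.1]) hL.le)
          (by rw [div_le_one hL]; linarith [htab.2]) hs0.le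
      have hk := key t htab
      rw [Real.norm_eq_abs, abs_mul, abs_sub_comm, abs_of_nonneg htb]
      have h2 : |f' t| ≤ ((b-t)/(b-a))^s * X + Y := by nlinarith [hk, h1, hY0]
      nlinarith [mul_le_mul_of_nonneg_left h2 htb, htb]
    have h := intervalIntegral.norm_integral_le_abs_of_norm_le hae ((hg2a.add hg2b).intervalIntegrable m b)
    rw [Real.norm_eq_abs] at h
    refine le_trans h (le_of_eq (abs_of_nonneg ?_))
    apply intervalIntegral.integral_nonneg hmid'
    intro u hu
    have hub : (0:ℝ) ≤ b - u := by linarith [hu.2]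
    have hrp : (0:ℝ) ≤ ((b - u)/(b-a))^s := Real.rpow_nonneg (div_nonneg hub hL.le) s
    exact add_nonneg (mul_nonneg hX0 (mul_nonneg hub hrp)) (mul_nonneg hY0 hub)
  -- compute the integrals
  have hK1 : (∫ x in a..m, (x - a)) = (m - a)^2/2 := by
    have h := intervalIntegral.integral_comp_sub_right (a := a) (b := m) (fun x => x) a
    rw [show (fun x : ℝ => x - a) = (fun x : ℝ => (fun y : ℝ => y) (x - a)) from rfl, h,
      sub_self, integral_id]
    norm_num
  have hK1' : (∫ x in m..b, (b - x)) = (b - m)^2/2 := by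
    have h := intervalIntegral.integral_comp_sub_left (a := m) (b := b) (fun x => x) b
    rw [show (fun x : ℝ => b - x) = (fun x : ℝ => (fun y : ℝ => y) (b - x)) from rfl, h,
      sub_self, integral_id]
    norm_num
  have hK2 : (∫ x in a..m, ((x - a) * ((x - a)/(b-a))^s))
      = (m - a)^((2:ℝ)+s) / (b-a)^s / (2+s) := by
    have hcong : EqOn (fun x => (x - a) * ((x - a)/(b-a))^s)
        (fun x => (x - a)^((1:ℝ)+s) / (b-a)^s) (uIcc a m) := by
      intro x hx
      rw [uIcc_of_le hmid] at hx
      have hx0 : (0:ℝ) ≤ x - a := by linarith [hx.1]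
      simp only
      rw [Real.div_rpow hx0 hL.le, Real.rpow_add' hx0 (by positivity), Real.rpow_one]
      ring
    rw [intervalIntegral.integral_congr hcong, intervalIntegral.integral_div]
    have h2 := intervalIntegral.integral_comp_sub_right (a := a) (b := m)
      (fun x => x^((1:ℝ)+s)) a
    rw [h2, sub_self, integral_rpow (Or.inl (by linarith : (-1:ℝ) < 1+s)),
      Real.zero_rpow (by positivity : (1:ℝ)+s+1 ≠ 0), show (1:ℝ)+s+1 = 2+s by ring]
    ring
  have hK2' : (∫ x in m..b, ((b - x) * ((b - x)/(b-a))^s))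
      = (b - m)^((2:ℝ)+s) / (b-a)^s / (2+s) := by
    have h := intervalIntegral.integral_comp_sub_left (a := m) (b := b)
      (fun y => y * (y/(b-a))^s) b
    rw [show (fun x : ℝ => (b - x) * ((b - x)/(b-a))^s)
        = (fun x : ℝ => (fun y : ℝ => y * (y/(b-a))^s) (b - x)) from rfl, h, sub_self]
    have hcong : EqOn (fun y : ℝ => y * (y/(b-a))^s)
        (fun y => y^((1:ℝ)+s) / (b-a)^s) (uIcc 0 (b - m)) := by
      intro y hy
      rw [uIcc_of_le (by linarith : (0:ℝ) ≤ b - m)] at hy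
      have hy0 : (0:ℝ) ≤ y := hy.1
      simp only
      rw [Real.div_rpow hy0 hL.le, Real.rpow_add' hy0 (by positivity), Real.rpow_one]
      ring
    rw [intervalIntegral.integral_congr hcong, intervalIntegral.integral_div,
      integral_rpow (Or.inl (by linarith : (-1:ℝ) < 1+s)),
      Real.zero_rpow (by positivity : (1:ℝ)+s+1 ≠ 0), show (1:ℝ)+s+1 = 2+s by ring]
    ring
  -- split the bounding integrals
  have hI1 : (∫ x in a..m, (X * (x - a) + Y * ((x - a) * ((x - a)/(b-a))^s)))
      = X * ((m - a)^2/2) + Y * ((m - a)^((2:ℝ)+s) / (b-a)^s / (2+s)) := by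
    rw [intervalIntegral.integral_add (hg1a.intervalIntegrable a m) (hg1b.intervalIntegrable a m),
      intervalIntegral.integral_const_mul, intervalIntegral.integral_const_mul, hK1, hK2]
  have hI2 : (∫ x in m..b, (X * ((b - x) * ((b - x)/(b-a))^s) + Y * (b - x)))
      = X * ((b - m)^((2:ℝ)+s) / (b-a)^s / (2+s)) + Y * ((b - m)^2/2) := by
    rw [intervalIntegral.integral_add (hg2a.intervalIntegrable m b) (hg2b.intervalIntegrable m b),
      intervalIntegral.integral_const_mul, intervalIntegral.integral_const_mul, hK1', hK2']
  -- put together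
  have hma : m - a = (b-a)/2 := by rw [hm_def]; ring
  have hbm : b - m = (b-a)/2 := by rw [hm_def]; ring
  have hpow : ((b-a)/2)^((2:ℝ)+s) = (b-a)^2 * (b-a)^s * (1/2:ℝ)^((2:ℝ)+s) := by
    rw [show (b-a)/2 = (b-a)*(1/2) by ring, Real.mul_rpow hL.le (by norm_num),
      Real.rpow_add hL 2 s, show ((2:ℝ)) = ((2:ℕ):ℝ) by norm_num, Real.rpow_natCast]
  have hs2 : (0:ℝ) < 2 + s := by linarith
  have hLs : (0:ℝ) < (b-a)^s := Real.rpow_pos_of_pos hL s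
  have hDval : (1/(b-a)) * ((X * ((m - a)^2/2) + Y * ((m - a)^((2:ℝ)+s) / (b-a)^s / (2+s)))
        + (X * ((b - m)^((2:ℝ)+s) / (b-a)^s / (2+s)) + Y * ((b - m)^2/2)))
      = (X + Y) * ((b-a) * (1/8 + (1/2:ℝ)^((2:ℝ)+s)/(2+s))) := by
    rw [hma, hbm, hpow]
    field_simp
    ring
  -- scalar inequality
  have hr0 : (0:ℝ) < 1 - s := by linarith
  have hD := kh_scalar (1-s) hr0 (by linarith)
  rw [show (3:ℝ)-(1-s) = 2+s by ring] at hD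
  have hip : 1/p = 1-s := by linarith
  have hp0 : (0:ℝ) < p := one_div_pos.mp (by rw [hip]; exact hr0)
  have hps : p * (1 - s) = 1 := by
    rw [← hip]; field_simp
  have hbase : 4/(p+1) = 4*(1-s)/(1+(1-s)) := by
    rw [div_eq_div_iff (ne_of_gt (by linarith : (0:ℝ) < p+1)) (ne_of_gt (by linarith : (0:ℝ) < 1+(1-s)))]
    nlinarith [hps]
  calc |f m - (1/(b-a)) * ∫ u in a..b, f u|
      ≤ (1/(b-a)) * (|∫ x in a..m, (x - a) * f' x| + |∫ x in m..b, (x - b) * f' x|) := hmain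
    _ ≤ (1/(b-a)) * ((X * ((m - a)^2/2) + Y * ((m - a)^((2:ℝ)+s) / (b-a)^s / (2+s)))
        + (X * ((b - m)^((2:ℝ)+s) / (b-a)^s / (2+s)) + Y * ((b - m)^2/2))) := by
        rw [← hI1, ← hI2]
        exact mul_le_mul_of_nonneg_left (add_le_add hb1 hb2) (by positivity)
    _ = (X + Y) * ((b-a) * (1/8 + (1/2:ℝ)^((2:ℝ)+s)/(2+s))) := hDval
    _ ≤ (X + Y) * ((b-a) * ((1/4) * (4*(1-s)/(1+(1-s)))^(1-s))) := by
        refine mul_le_mul_of_nonneg_left (mul_le_mul_of_nonneg_left ?_ hL.le) (add_nonneg hX0 hY0)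
        exact hD
    _ = ((b - a) / 4) * (4 / (p + 1)) ^ (1 / p) * (X + Y) := by
        rw [hip, hbase]; ring
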